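/- If f is measure-expansive, then there exists δ > 0 such that for all x ∈ M, the set Γ_δ(x) is countable (i.e. f is countably-expansive). -/

import Mathlib

open Metric MeasureTheory Set Filter Topology ENNReal

variable {M : Type*}

/-- The dynamical ball of an iterated homeomorphism. -/
def Gamma [MetricSpace M] (f : M ≃ₜ M) (δ : ℝ) (x : M) : Set M :=
  {y | ∀ n : ℤ, dist ((f.toEquiv ^ n) x) ((f.toEquiv ^ n) y) ≤ δ}

noncomputable section AuxHaar

/-- Haar probability measure on the Cantor group `ℕ → ZMod 2`. -/
def nuG : Measure (ℕ → ZMod 2) :=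
  MeasureTheory.Measure.addHaarMeasure ⟨⟨Set.univ, isCompact_univ⟩, by simp⟩

instance : IsProbabilityMeasure nuG := by
  constructor
  exact MeasureTheory.Measure.addHaarMeasure_self
    (K₀ := ⟨⟨Set.univ, isCompact_univ⟩, by simp⟩)

instance : (𝓝[≠] (0 : ℕ → ZMod 2)).NeBot := by
  have ht : Tendsto (fun k : ℕ => (Pi.single k 1 : ℕ → ZMod 2)) atTop (𝓝[≠] 0) := by
    apply tendsto_nhdsWithin_of_tendsto_nhds_of_eventually_within
    · rw [tendsto_pi_nhds]
      intro i
      apply tendsto_nhds_of_eventually_eq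
      filter_upwards [Filter.eventually_gt_atTop i] with k hk
      simp [Pi.single_apply, hk.ne']
    · filter_upwards with k
      intro hk
      have := congrFun hk k
      simp at this
  exact neBot_of_le ht

instance : NullSingletonClass nuG := by
  haveI : nuG.IsAddHaarMeasure := MeasureTheory.Measure.isAddHaarMeasure_addHaarMeasure _
  exact MeasureTheory.Measure.IsAddHaarMeasure.nullSingletonClass nuG

end AuxHaar

/-- Every uncountable closed subset of a compact metric space carries a non-atomic
Borel probability measure giving it full measure. -/
lemma exists_nonatomic_measure [MetricSpace M] [CompactSpace M] [MeasurableSpace M]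
    [BorelSpace M] {C : Set M} (hC : IsClosed C) (hunc : ¬C.Countable) :
    ∃ μ : Measure M, IsProbabilityMeasure μ ∧ (∀ x : M, μ {x} = 0) ∧ μ C = 1 := by
  obtain ⟨g, hgC, hgcont, hginj⟩ := hC.exists_nat_bool_injection_of_not_countable hunc
  let ψ : (ℕ → ZMod 2) → (ℕ → Bool) := fun a i => finTwoEquiv (a i)
  have hψc : Continuous ψ :=
    continuous_pi fun i => Continuous.comp continuous_of_discreteTopology (continuous_apply i)
  have hψi : Function.Injective ψ := by
    intro a b hab
    funext i
    exact finTwoEquiv.injective (congrFun hab i)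
  set φ : (ℕ → ZMod 2) → M := g ∘ ψ with hφ
  have hφc : Continuous φ := hgcont.comp hψc
  have hφi : Function.Injective φ := hginj.comp hψi
  have hφm : Measurable φ := hφc.measurable
  refine ⟨nuG.map φ, Measure.isProbabilityMeasure_map hφm.aemeasurable, ?_, ?_⟩
  · intro x
    rw [Measure.map_apply hφm (measurableSet_singleton x)]
    have : (φ ⁻¹' {x}).Subsingleton := fun a ha b hb => hφi (ha.trans hb.symm)
    exact this.measure_zero nuG
  · rw [Measure.map_apply hφm hC.measurableSet]
    have : φ ⁻¹' C = Set.univ := eq_univ_of_forall fun a => hgC ⟨ψ a, rfl⟩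
    rw [this]
    exact measure_univ

lemma continuous_zpow_equiv [MetricSpace M] (f : M ≃ₜ M) (n : ℤ) :
    Continuous ⇑(f.toEquiv ^ n) := by
  induction n using Int.induction_on with
  | zero => simpa using continuous_id
  | succ n ih =>
    have : ⇑(f.toEquiv ^ ((n : ℤ) + 1)) = ⇑(f.toEquiv ^ (n : ℤ)) ∘ ⇑f.toEquiv := by
      ext x; simp [zpow_add_one, Equiv.Perm.mul_apply]
    rw [this]; exact ih.comp f.continuous
  | pred n ih =>
    have : ⇑(f.toEquiv ^ (-(n : ℤ) - 1)) = ⇑(f.toEquiv ^ (-(n : ℤ))) ∘ ⇑f.symm.toEquiv := by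
      ext x; simp [zpow_sub_one, Equiv.Perm.mul_apply, Equiv.Perm.inv_def]
    rw [this]; exact ih.comp f.symm.continuous

lemma isClosed_gamma [MetricSpace M] (f : M ≃ₜ M) (δ : ℝ) (x : M) :
    IsClosed (Gamma f δ x) := by
  have : Gamma f δ x = ⋂ n : ℤ, {y | dist ((f.toEquiv ^ n) x) ((f.toEquiv ^ n) y) ≤ δ} := by
    ext y; simp [Gamma]
  rw [this]
  exact isClosed_iInter fun n =>
    isClosed_le (continuous_const.dist (continuous_zpow_equiv f n)) continuous_const

lemma gamma_mono [MetricSpace M] (f : M ≃ₜ M) {δ δ' : ℝ} (h : δ ≤ δ') (x : M) :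
    Gamma f δ x ⊆ Gamma f δ' x := fun y hy n => (hy n).trans h

theorem stmt2 [MetricSpace M] [CompactSpace M] [MeasurableSpace M] [BorelSpace M]
    (f : M ≃ₜ M)
    (h : ∀ μ : Measure M, IsProbabilityMeasure μ → (∀ x : M, μ {x} = 0) →
      ∃ δ > (0:ℝ), ∀ x : M, μ (Gamma f δ x) = 0) :
    ∃ δ > (0:ℝ), ∀ x : M, (Gamma f δ x).Countable := by
  by_contra hcon
  push_neg at hcon
  choose x hx using fun n : ℕ => hcon (1 / ((n : ℝ) + 1)) (by positivity)
  choose μ hμp hμa hμ1 using fun n : ℕ =>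
    exists_nonatomic_measure (isClosed_gamma f (1 / ((n : ℝ) + 1)) (x n)) (hx n)
  set c : ℕ → ℝ≥0∞ := fun n => (2 : ℝ≥0∞)⁻¹ ^ (n + 1) with hc
  have hcsum : (∑' n : ℕ, c n) = 1 := by
    have h2 : (∑' n : ℕ, (2 : ℝ≥0∞)⁻¹ ^ n) = 2 := by
      rw [ENNReal.tsum_geometric, ENNReal.one_sub_inv_two, inv_inv]
    calc (∑' n : ℕ, c n) = ∑' n : ℕ, (2 : ℝ≥0∞)⁻¹ ^ n * 2⁻¹ := by
          simp [hc, pow_succ]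
      _ = 2 * 2⁻¹ := by rw [ENNReal.tsum_mul_right, h2]
      _ = 1 := ENNReal.mul_inv_cancel (by norm_num) (by norm_num)
  set ν : Measure M := Measure.sum (fun n => c n • μ n) with hν
  have hνapp : ∀ s : Set M, MeasurableSet s → ν s = ∑' n : ℕ, c n * μ n s := by
    intro s hs
    rw [hν, Measure.sum_apply _ hs]
    simp [Measure.smul_apply, smul_eq_mul]
  have hνprob : IsProbabilityMeasure ν := by
    constructor
    rw [hνapp _ MeasurableSet.univ]
    simp only [measure_univ, mul_one]
    exact hcsum
  have hνatom : ∀ y : M, ν {y} = 0 := by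
    intro y
    rw [hνapp _ (measurableSet_singleton y)]
    simp [hμa]
  obtain ⟨δ, hδ, hzero⟩ := h ν hνprob hνatom
  obtain ⟨n, hn⟩ := exists_nat_one_div_lt hδ
  have hle : (2 : ℝ≥0∞)⁻¹ ^ (n + 1) ≤ ν (Gamma f δ (x n)) := by
    rw [hνapp _ (isClosed_gamma f δ (x n)).measurableSet]
    calc (2 : ℝ≥0∞)⁻¹ ^ (n + 1) = c n * μ n (Gamma f (1 / ((n : ℝ) + 1)) (x n)) := by
          rw [hμ1 n, mul_one]
      _ ≤ c n * μ n (Gamma f δ (x n)) := by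
          exact mul_le_mul_right (measure_mono (gamma_mono f hn.le (x n))) _
      _ ≤ ∑' m : ℕ, c m * μ m (Gamma f δ (x n)) := ENNReal.le_tsum n
  rw [hzero (x n)] at hle
  simp at hle
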